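/- Suppose G ⊆ {-1,1}^X is not k-irreducible but is (k-1)-irreducible. Then there exist points x_1,...,x_k ∈ X and a reducing array of depth k, i.e., tuples b^(1),...,b^(k+1) with b^(j) ∈ {-1,1}^{min(j,k)}, satisfying b^(j+1)_{j'} = b^(j)_{j'} for j' < j ≤ k and b^(j+1)_j = -b^(j)_j for j ≤ k, such that for every j ∈ [k+1]: 0 ≤ Ldim(G|_{(x_1, b^(j)_1),...,(x_{min(j,k)}, b^(j)_{min(j,k)})}) < Ldim(G). -/

import Mathlib

open Classical

/-- The subclass of `G` consistent with a finite list of labeled examples. -/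
def restrictList {X : Type*} (G : Set (X → Bool)) (S : List (X × Bool)) : Set (X → Bool) :=
  {f ∈ G | ∀ p ∈ S, f p.1 = p.2}

/-- `G` restricted to hypotheses with `f x = b`. -/
def res {X : Type*} (G : Set (X → Bool)) (x : X) (b : Bool) : Set (X → Bool) :=
  {f ∈ G | f x = b}

/-- The subclass of `G` consistent with the branch `b` of the binary tree `t`
(nodes of `t` are indexed by the list of bits on the path from the root). -/
def branchRestrict {X : Type*} (G : Set (X → Bool)) (t : List Bool → X) (b : List Bool) :
    Set (X → Bool) :=
  {f ∈ G | ∀ i < b.length, f (t (b.take i)) = b.getD i false}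

/-- `G` shatters the complete binary tree `t` to depth `n`. -/
def ShattersTree {X : Type*} (G : Set (X → Bool)) (t : List Bool → X) (n : ℕ) : Prop :=
  ∀ b : List Bool, b.length = n → (branchRestrict G t b).Nonempty

/-- `G` shatters some complete `X`-valued binary tree of depth `n`. -/
def ShattersDepth {X : Type*} (G : Set (X → Bool)) (n : ℕ) : Prop :=
  ∃ t : List Bool → X, ShattersTree G t n

/-- Littlestone dimension: the largest depth of a shattered tree, with `Ldim ∅ = ⊥` (i.e. `-1`). -/
noncomputable def Ldim {X : Type*} (G : Set (X → Bool)) : WithBot ℕ∞ :=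
  ⨆ n : {n : ℕ // ShattersDepth G n}, (n.1 : WithBot ℕ∞)

/-- `G` is `k`-irreducible: every depth-`k` tree has a branch whose restriction preserves `Ldim`. -/
def Irred {X : Type*} (G : Set (X → Bool)) (k : ℕ) : Prop :=
  ∀ t : List Bool → X, ∃ b : List Bool, b.length = k ∧
    Ldim (branchRestrict G t b) = Ldim G

/-- The SOA classifier of `G`: `SOA G x = true` iff `Ldim (G|_(x,1)) ≥ Ldim (G|_(x,-1))`. -/
noncomputable def SOA {X : Type*} (G : Set (X → Bool)) (x : X) : Bool :=
  if Ldim (res G x false) ≤ Ldim (res G x true) then true else false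

section Aux
variable {X : Type*} {G A B : Set (X → Bool)} {t : List Bool → X} {x : X} {n m : ℕ}

lemma branchRestrict_nil (G : Set (X → Bool)) (t : List Bool → X) :
    branchRestrict G t [] = G := by
  ext f; simp [branchRestrict]

lemma branchRestrict_subset : branchRestrict G t b ⊆ G := fun f hf => hf.1

lemma res_subset : res G x v ⊆ G := fun f hf => hf.1

lemma res_union (G : Set (X → Bool)) (x : X) : res G x true ∪ res G x false = G := by
  ext f; cases hf : f x <;> simp [res, hf]

lemma res_union_distrib (A B : Set (X → Bool)) (x : X) (v : Bool) :
    res (A ∪ B) x v = res A x v ∪ res B x v := by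
  ext f; simp only [res, Set.mem_union, Set.mem_setOf_eq, Set.mem_sep_iff]; tauto

lemma branchRestrict_snoc (G : Set (X → Bool)) (t : List Bool → X) (q : List Bool) (v : Bool) :
    branchRestrict G t (q ++ [v]) = res (branchRestrict G t q) (t q) v := by
  ext f
  simp only [branchRestrict, res, Set.mem_setOf_eq, Set.mem_sep_iff, List.length_append,
    List.length_cons, List.length_nil]
  constructor
  · rintro ⟨hG, h⟩
    refine ⟨⟨hG, fun i hi => ?_⟩, ?_⟩
    · have := h i (by omega)
      rwa [List.take_append_of_le_length (by omega), List.getD_append _ _ _ _ hi] at this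
    · have := h q.length (by omega)
      rwa [List.take_append_of_le_length le_rfl, List.take_length,
        List.getD_append_right _ _ _ _ le_rfl, Nat.sub_self] at this
  · rintro ⟨⟨hG, h⟩, hv⟩
    refine ⟨hG, fun i hi => ?_⟩
    rcases Nat.lt_or_ge i q.length with hlt | hge
    · rw [List.take_append_of_le_length (by omega), List.getD_append _ _ _ _ hlt]
      exact h i hlt
    · have : i = q.length := by omega
      subst this
      rwa [List.take_append_of_le_length le_rfl, List.take_length,
        List.getD_append_right _ _ _ _ le_rfl, Nat.sub_self]

lemma branchRestrict_prefix (h : p <+: q) :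
    branchRestrict G t q ⊆ branchRestrict G t p := by
  obtain ⟨r, rfl⟩ := h
  intro f hf
  refine ⟨hf.1, fun i hi => ?_⟩
  have := hf.2 i (by simp; omega)
  rwa [List.take_append_of_le_length (by omega), List.getD_append _ _ _ _ hi] at this

end Aux
section Aux2
variable {X : Type*} {G A B : Set (X → Bool)} {t : List Bool → X} {x : X} {n m : ℕ}

lemma shattersTree_mono (hAB : A ⊆ B) (h : ShattersTree A t n) : ShattersTree B t n :=
  fun b hb => (h b hb).mono (fun f hf => ⟨hAB hf.1, hf.2⟩)

lemma shattersDepth_mono (hAB : A ⊆ B) (h : ShattersDepth A n) : ShattersDepth B n := by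
  obtain ⟨t, ht⟩ := h; exact ⟨t, shattersTree_mono hAB ht⟩

lemma shattersDepth_of_succ (h : ShattersDepth A (n + 1)) : ShattersDepth A n := by
  obtain ⟨t, ht⟩ := h
  refine ⟨t, fun b hb => ?_⟩
  exact (ht (b ++ [false]) (by simp [hb])).mono (branchRestrict_prefix ⟨[false], rfl⟩)

lemma shattersDepth_anti (h : m ≤ n) (hn : ShattersDepth A n) : ShattersDepth A m := by
  induction n with
  | zero => simpa [Nat.le_zero.mp h] using hn
  | succ n ih =>
    rcases Nat.lt_or_ge m (n+1) with h' | h'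
    · exact ih (by omega) (shattersDepth_of_succ hn)
    · have : m = n + 1 := by omega
      subst this; exact hn

lemma shattersDepth_zero (x₀ : X) (h : A.Nonempty) : ShattersDepth A 0 := by
  refine ⟨fun _ => x₀, fun b hb => ?_⟩
  rw [List.length_eq_zero_iff] at hb; subst hb
  rwa [branchRestrict_nil]

lemma nonempty_of_shattersDepth (h : ShattersDepth A n) : A.Nonempty := by
  obtain ⟨t, ht⟩ := h
  exact ((ht (List.replicate n false) (by simp)).mono branchRestrict_subset)

lemma le_ldim_iff : (n : WithBot ℕ∞) ≤ Ldim A ↔ ShattersDepth A n := by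
  constructor
  · intro h
    by_contra hn
    rcases Nat.eq_zero_or_pos n with rfl | hpos
    · have hbot : Ldim A ≤ ⊥ := by
        refine iSup_le fun ⟨m, hm⟩ => absurd (shattersDepth_anti (Nat.zero_le m) hm) hn
      have := le_trans h hbot
      simp at this
    · obtain ⟨n', rfl⟩ : ∃ n', n = n' + 1 := ⟨n - 1, by omega⟩
      have hb : Ldim A ≤ ((n' : ℕ) : WithBot ℕ∞) := by
        refine iSup_le fun ⟨m, hm⟩ => ?_
        have hmn : m ≤ n' := by
          by_contra hc
          exact hn (shattersDepth_anti (by omega) hm)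
        exact_mod_cast hmn
      have := le_trans h hb
      have : (n' + 1 : ℕ) ≤ n' := by exact_mod_cast this
      omega
  · intro h
    exact le_iSup (fun p : {n : ℕ // ShattersDepth A n} => (p.1 : WithBot ℕ∞)) ⟨n, h⟩

lemma ldim_mono (hAB : A ⊆ B) : Ldim A ≤ Ldim B :=
  iSup_le fun ⟨m, hm⟩ => le_ldim_iff.2 (shattersDepth_mono hAB hm)

lemma withBot_cases (A : WithBot ℕ∞) (h1 : A ≠ ⊥) (h2 : A ≠ ⊤) :
    ∃ d : ℕ, A = (d : WithBot ℕ∞) := by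
  match A, h1, h2 with
  | WithBot.some (WithTop.some d), _, _ => exact ⟨d, rfl⟩
  | WithBot.some ⊤, _, h2 => exact absurd rfl h2
  | ⊥, h1, _ => exact absurd rfl h1

lemma exists_not_shatters (h : Ldim A ≠ ⊤) : ∃ n : ℕ, ¬ ShattersDepth A n := by
  by_contra hc
  push_neg at hc
  have hle : ∀ n : ℕ, (n : WithBot ℕ∞) ≤ Ldim A := fun n => le_ldim_iff.2 (hc n)
  rcases eq_or_ne (Ldim A) ⊥ with hb | hb
  · have := hle 0; rw [hb] at this; simp at this
  · obtain ⟨d, hd⟩ := withBot_cases _ hb h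
    have h2 := hle (d + 1)
    rw [hd] at h2
    have : d + 1 ≤ d := by exact_mod_cast h2
    omega

end Aux2
section Aux3
variable {X : Type*} {A B C : Set (X → Bool)} {t : List Bool → X} {x : X} {n m : ℕ}

/-- Combine two trees under a common root. -/
def graft (x : X) (t1 t0 : List Bool → X) : List Bool → X
  | [] => x
  | (true :: r) => t1 r
  | (false :: r) => t0 r

lemma combine (x : X) (h1 : ShattersDepth (res A x true) n)
    (h0 : ShattersDepth (res A x false) n) : ShattersDepth A (n + 1) := by
  obtain ⟨t1, ht1⟩ := h1
  obtain ⟨t0, ht0⟩ := h0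
  refine ⟨graft x t1 t0, fun b hb => ?_⟩
  match b, hb with
  | (v :: r), hb =>
    have hr : r.length = n := by simpa using hb
    have key : ∀ (tv : List Bool → X), (∀ s, graft x t1 t0 (v :: s) = tv s) →
        ShattersTree (res A x v) tv n →
        (branchRestrict A (graft x t1 t0) (v :: r)).Nonempty := by
      intro tv hgraft htv
      obtain ⟨f, ⟨⟨hfA, hfx⟩, hf2⟩⟩ := htv r hr
      refine ⟨f, hfA, fun i hi => ?_⟩
      match i with
      | 0 => simpa [graft] using hfx
      | i + 1 =>
        have hin : i < n := by simpa [hr] using hi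
        have := hf2 i (by omega)
        simpa [List.take_succ_cons, List.getD_cons_succ, hgraft] using this
    cases v
    · exact key t0 (fun s => rfl) ht0
    · exact key t1 (fun s => rfl) ht1

lemma subtree (h : ShattersTree C t (n + 1)) (v : Bool) :
    ShattersTree (res C (t []) v) (fun s => t (v :: s)) n := by
  intro r hr
  obtain ⟨f, hf⟩ := h (v :: r) (by simp [hr])
  refine ⟨f, ⟨hf.1, ?_⟩, fun i hi => ?_⟩
  · have := hf.2 0 (by simp)
    simpa using this
  · have := hf.2 (i + 1) (by simp; omega)
    simpa using this

lemma union_shatters (b : ℕ) : ∀ (a : ℕ) (A B : Set (X → Bool)),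
    ShattersDepth (A ∪ B) (a + b + 1) → ShattersDepth A a ∨ ShattersDepth B b := by
  intro a
  induction a with
  | zero =>
    intro A B h
    rcases Set.eq_empty_or_nonempty A with rfl | hA
    · right
      rw [Set.empty_union] at h
      exact shattersDepth_anti (by omega) h
    · left
      obtain ⟨t, _⟩ := h
      exact shattersDepth_zero (t []) hA
  | succ a ih =>
    intro A B h
    obtain ⟨t, ht⟩ := h
    have hsub : ∀ v : Bool, ShattersDepth (res A (t []) v) a ∨ ShattersDepth (res B (t []) v) b := by
      intro v
      have h1 : ShattersTree (res (A ∪ B) (t []) v) (fun s => t (v :: s)) (a + b + 1) := by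
        have : a + 1 + b + 1 = (a + b + 1) + 1 := by omega
        rw [this] at ht
        exact subtree ht v
      rw [res_union_distrib] at h1
      exact ih _ _ ⟨_, h1⟩
    rcases hsub true with h1 | h1
    · rcases hsub false with h0 | h0
      · exact Or.inl (combine (t []) h1 h0)
      · exact Or.inr (shattersDepth_mono res_subset h0)
    · exact Or.inr (shattersDepth_mono res_subset h1)

end Aux3
section Skip
variable {X : Type*}

noncomputable def skip (G : Set (X → Bool)) (t : List Bool → X) (k : ℕ) (q : List Bool) :
    List Bool :=
  if h : q.length < k then
    if res (branchRestrict G t q) (t q) true = ∅ then skip G t k (q ++ [false])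
    else if res (branchRestrict G t q) (t q) false = ∅ then skip G t k (q ++ [true])
    else q
  else q
termination_by k - q.length
decreasing_by all_goals (simp only [List.length_append, List.length_cons, List.length_nil]; omega)

variable {G : Set (X → Bool)} {t : List Bool → X} {k : ℕ}

lemma skip_prefix (q : List Bool) : q <+: skip G t k q := by
  generalize hm : k - q.length = m
  induction m using Nat.strong_induction_on generalizing q with
  | _ m ih =>
    rw [skip]
    split
    · next h =>
      split
      · exact List.IsPrefix.trans ⟨[false], rfl⟩ (ih (k - (q ++ [false]).length) (by simp; omega) _ rfl)
      · split
        · exact List.IsPrefix.trans ⟨[true], rfl⟩ (ih (k - (q ++ [true]).length) (by simp; omega) _ rfl)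
        · exact List.prefix_refl q
    · exact List.prefix_refl q

lemma skip_length_le (q : List Bool) (hq : q.length ≤ k) : (skip G t k q).length ≤ k := by
  generalize hm : k - q.length = m
  induction m using Nat.strong_induction_on generalizing q with
  | _ m ih =>
    rw [skip]
    split
    · next h =>
      split
      · exact ih (k - (q ++ [false]).length) (by simp; omega) _ (by simp; omega) rfl
      · split
        · exact ih (k - (q ++ [true]).length) (by simp; omega) _ (by simp; omega) rfl
        · exact hq
    · exact hq

lemma skip_BR (q : List Bool) :
    branchRestrict G t (skip G t k q) = branchRestrict G t q := by
  generalize hm : k - q.length = m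
  induction m using Nat.strong_induction_on generalizing q with
  | _ m ih =>
    rw [skip]
    split
    · next h =>
      split
      · next he =>
        rw [ih (k - (q ++ [false]).length) (by simp; omega) _ rfl]
        rw [branchRestrict_snoc]
        ext f
        constructor
        · exact fun hf => hf.1
        · intro hf
          refine ⟨hf, ?_⟩
          cases hfx : f (t q)
          · rfl
          · exact absurd (Set.eq_empty_iff_forall_notMem.mp he f ⟨hf, hfx⟩) (fun h => h)
      · next he =>
        split
        · next he2 =>
          rw [ih (k - (q ++ [true]).length) (by simp; omega) _ rfl]
          rw [branchRestrict_snoc]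
          ext f
          constructor
          · exact fun hf => hf.1
          · intro hf
            refine ⟨hf, ?_⟩
            cases hfx : f (t q)
            · exact absurd (Set.eq_empty_iff_forall_notMem.mp he2 f ⟨hf, hfx⟩) (fun h => h)
            · rfl
        · rfl
    · rfl

lemma skip_fixed (q : List Bool) (hq : q.length < k) (hfix : skip G t k q = q) (v : Bool) :
    res (branchRestrict G t q) (t q) v ≠ ∅ := by
  have hlen : ∀ r : List Bool, r.length ≤ (skip G t k r).length :=
    fun r => (skip_prefix r).length_le
  rw [skip, dif_pos hq] at hfix
  by_contra he
  split at hfix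
  · have h1 := hlen (q ++ [false])
    rw [hfix] at h1
    simp at h1
  · split at hfix
    · have h1 := hlen (q ++ [true])
      rw [hfix] at h1
      simp at h1
    · cases v
      · next _ h2 => exact h2 he
      · next h1 _ => exact h1 he

noncomputable def node (G : Set (X → Bool)) (t : List Bool → X) (k : ℕ) (s : List Bool) :
    List Bool :=
  s.foldl (fun q v => skip G t k (q ++ [v])) (skip G t k [])

lemma node_nil : node G t k [] = skip G t k [] := rfl

lemma node_snoc (s : List Bool) (v : Bool) :
    node G t k (s ++ [v]) = skip G t k (node G t k s ++ [v]) := by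
  simp [node, List.foldl_append]

lemma BR_node (s : List Bool) :
    branchRestrict G (fun s' => t (node G t k s')) s = branchRestrict G t (node G t k s) := by
  induction s using List.reverseRecOn with
  | nil => rw [branchRestrict_nil, node_nil, skip_BR, branchRestrict_nil]
  | append_singleton s v ih =>
    rw [branchRestrict_snoc, ih, node_snoc, skip_BR, ← branchRestrict_snoc]

end Skip

section Aux5
variable {X : Type*} {A : Set (X → Bool)} {x : X} {n : ℕ}

lemma combine' (x : X) (v : Bool) (h1 : ShattersDepth (res A x v) n)
    (h0 : ShattersDepth (res A x (!v)) n) : ShattersDepth A (n + 1) := by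
  cases v
  · exact combine x (by simpa using h0) h1
  · exact combine x h1 (by simpa using h0)

end Aux5

/-- If `G` is not `k`-irreducible but is `(k-1)`-irreducible, then there are points
`x 1, ..., x k` and a reducing array `b` of depth `k` (here `b j i` is the `i`-th bit of the
`j`-th tuple, for `1 ≤ j ≤ k+1` and `1 ≤ i ≤ min j k`) such that every tuple of the array
yields a nonempty restriction of `G` of strictly smaller Littlestone dimension. -/
theorem stmt7 {X : Type*} (G : Set (X → Bool)) (k : ℕ) (hk : 1 ≤ k)
    (hnot : ¬ Irred G k) (hirr : Irred G (k - 1)) :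
    ∃ (x : ℕ → X) (b : ℕ → ℕ → Bool),
      (∀ j' j : ℕ, j' < j → j ≤ k → b (j + 1) j' = b j j') ∧
      (∀ j : ℕ, 1 ≤ j → j ≤ k → b (j + 1) j = ! b j j) ∧
      (∀ j : ℕ, 1 ≤ j → j ≤ k + 1 →
        (0 : WithBot ℕ∞) ≤
            Ldim (restrictList G
              (List.ofFn fun i : Fin (min j k) => (x (i.1 + 1), b j (i.1 + 1)))) ∧
          Ldim (restrictList G
              (List.ofFn fun i : Fin (min j k) => (x (i.1 + 1), b j (i.1 + 1))))
            < Ldim G) := by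
  obtain ⟨K, rfl⟩ : ∃ K, k = K + 1 := ⟨k - 1, by omega⟩
  have hirr' : Irred G K := by simpa using hirr
  -- G is nonempty
  have hGne : G.Nonempty := by
    rcases Set.eq_empty_or_nonempty G with hempty | h
    · exfalso
      apply hnot
      intro t
      refine ⟨List.replicate (K+1) false, by simp, ?_⟩
      congr 1
      rw [hempty]
      exact Set.eq_empty_iff_forall_notMem.mpr
        (fun f hf => Set.notMem_empty f (branchRestrict_subset hf))
    · exact h
  -- the bad tree
  rw [Irred] at hnot
  push_neg at hnot
  obtain ⟨t, ht⟩ := hnot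
  have hbad : ∀ b : List Bool, b.length = K + 1 →
      Ldim (branchRestrict G t b) ≠ Ldim G := fun b hb => ht b hb
  -- the compressed tree and the good branch
  obtain ⟨c, hclen, hcL⟩ := hirr' (fun s => t (node G t (K+1) s))
  have hBRn : ∀ s, branchRestrict G (fun s' => t (node G t (K+1) s')) s
      = branchRestrict G t (node G t (K+1) s) := fun s => BR_node s
  -- Ldim is preserved along every prefix of the branch
  have hLdimN : ∀ i : ℕ, Ldim (branchRestrict G t (node G t (K+1) (c.take i))) = Ldim G := by
    intro i
    have h1 : branchRestrict G (fun s' => t (node G t (K+1) s')) c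
        ⊆ branchRestrict G (fun s' => t (node G t (K+1) s')) (c.take i) :=
      branchRestrict_prefix (List.take_prefix i c)
    rw [hBRn, hBRn] at h1
    refine le_antisymm (ldim_mono branchRestrict_subset) ?_
    calc Ldim G = Ldim (branchRestrict G t (node G t (K+1) c)) := by rw [← hBRn, hcL]
    _ ≤ _ := ldim_mono h1
  have htake_succ : ∀ i < K, c.take (i+1) = c.take i ++ [c.getD i false] := by
    intro i hi
    have hi' : i < c.length := by omega
    rw [List.take_succ, List.getElem?_eq_getElem hi']
    simp [List.getD_eq_getElem?_getD, List.getElem?_eq_getElem hi']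
  have hlt : ∀ i, (node G t (K+1) (c.take i)).length < K + 1 := by
    intro i
    induction i with
    | zero =>
      have h1 : (node G t (K+1) (List.take 0 c)).length ≤ K + 1 := by
        simpa [node_nil] using skip_length_le (G := G) (t := t) (k := K+1) [] (by simp)
      by_contra hcon
      push_neg at hcon
      exact hbad _ (by omega) (hLdimN 0)
    | succ i ihl =>
      rcases Nat.lt_or_ge i K with hi | hi
      · have heq : node G t (K+1) (c.take (i+1))
            = skip G t (K+1) (node G t (K+1) (c.take i) ++ [c.getD i false]) := by
          rw [htake_succ i hi, node_snoc]
        have h1 : (node G t (K+1) (c.take (i+1))).length ≤ K + 1 := by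
          rw [heq]; exact skip_length_le _ (by simp; omega)
        by_contra hcon
        push_neg at hcon
        exact hbad _ (by omega) (hLdimN (i+1))
      · have heq2 : c.take (i+1) = c.take i := by
          rw [List.take_of_length_le (by omega), List.take_of_length_le (by omega)]
        rw [heq2]; exact ihl
  have hincr : ∀ i < K, (node G t (K+1) (c.take i)).length + 1
      ≤ (node G t (K+1) (c.take (i+1))).length := by
    intro i hi
    rw [htake_succ i hi, node_snoc]
    have h2 := (skip_prefix (G := G) (t := t) (k := K+1)
      (node G t (K+1) (c.take i) ++ [c.getD i false])).length_le
    simpa using h2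
  have hlen_eq : ∀ i ≤ K, (node G t (K+1) (c.take i)).length = i := by
    have hge : ∀ i ≤ K, i ≤ (node G t (K+1) (c.take i)).length := by
      intro i hi
      induction i with
      | zero => omega
      | succ i ihg =>
        have h1 := hincr i (by omega)
        have h2 := ihg (by omega)
        omega
    have hchain : ∀ d i, i + d ≤ K → (node G t (K+1) (c.take i)).length + d
        ≤ (node G t (K+1) (c.take (i+d))).length := by
      intro d
      induction d with
      | zero => intro i _; simp
      | succ d ihd =>
        intro i hid
        have h1 := ihd i (by omega)
        have h2 := hincr (i+d) (by omega)
        have h3 : i + (d+1) = (i+d) + 1 := by omega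
        rw [h3]
        omega
    intro i hi
    have h1 := hchain (K - i) i (by omega)
    have h2 := hge i hi
    have h3 := hlt K
    rw [show i + (K - i) = K by omega] at h1
    omega
  have hNfix : ∀ i ≤ K, node G t (K+1) (c.take i) = c.take i := by
    intro i hi
    induction i with
    | zero =>
      have h0 : (node G t (K+1) (c.take 0)).length = 0 := hlen_eq 0 (by omega)
      rw [List.length_eq_zero_iff] at h0
      simpa using h0
    | succ i ihN =>
      have heq : node G t (K+1) (c.take (i+1))
          = skip G t (K+1) (node G t (K+1) (c.take i) ++ [c.getD i false]) := by
        rw [htake_succ i (by omega), node_snoc]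
      have hpre := skip_prefix (G := G) (t := t) (k := K+1)
        (node G t (K+1) (c.take i) ++ [c.getD i false])
      rw [← heq] at hpre
      have hlen2 : (node G t (K+1) (c.take i) ++ [c.getD i false]).length
          = (node G t (K+1) (c.take (i+1))).length := by
        simp [hlen_eq i (by omega), hlen_eq (i+1) hi]
      have heq3 := hpre.eq_of_length hlen2
      rw [← heq3, ihN (by omega)]
      exact (htake_succ i (by omega)).symm
  have hskipfix : ∀ i ≤ K, skip G t (K+1) (c.take i) = c.take i := by
    intro i hi
    match i with
    | 0 =>
      have h0 : node G t (K+1) (c.take 0) = c.take 0 := hNfix 0 (by omega)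
      simpa [node_nil] using h0
    | (i+1) =>
      have heq : skip G t (K+1) (c.take (i+1)) = node G t (K+1) (c.take (i+1)) := by
        rw [htake_succ i (by omega)]
        conv_lhs => rw [show c.take i = node G t (K+1) (c.take i) from (hNfix i (by omega)).symm]
        rw [← node_snoc]
      rw [heq]
      exact hNfix (i+1) hi
  have hflip : ∀ i ≤ K, ∀ v, res (branchRestrict G t (c.take i)) (t (c.take i)) v ≠ ∅ := by
    intro i hi v
    apply skip_fixed (c.take i) ?_ (hskipfix i hi) v
    rw [List.length_take]
    omega
  have hLdim' : ∀ i ≤ K, Ldim (branchRestrict G t (c.take i)) = Ldim G := by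
    intro i hi
    have h1 := hLdimN i
    rwa [hNfix i hi] at h1
  have hctake : c.take K = c := by rw [← hclen]; exact List.take_length
  have hC : ∀ v : Bool, Ldim (branchRestrict G t (c ++ [v])) ≠ Ldim G := by
    intro v; exact hbad _ (by simp [hclen])
  have h_top : Ldim G ≠ ⊤ := by
    intro htop
    have hH : Ldim (branchRestrict G t c) = ⊤ := by
      have h1 := hLdim' K le_rfl
      rwa [hctake, htop] at h1
    obtain ⟨a1, ha1⟩ := exists_not_shatters (htop ▸ hC true)
    obtain ⟨a0, ha0⟩ := exists_not_shatters (htop ▸ hC false)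
    have hsd : ShattersDepth (branchRestrict G t c) (a1 + a0 + 1) :=
      le_ldim_iff.1 (by rw [hH]; exact le_top)
    rw [← res_union (branchRestrict G t c) (t c)] at hsd
    rcases union_shatters a0 a1 _ _ hsd with h | h
    · rw [← branchRestrict_snoc] at h; exact ha1 h
    · rw [← branchRestrict_snoc] at h; exact ha0 h
  have h_bot : Ldim G ≠ ⊥ := by
    intro hbot
    have h0 : ShattersDepth G 0 := shattersDepth_zero (t []) hGne
    have h1 := le_ldim_iff.2 h0
    rw [hbot] at h1
    simp at h1
  obtain ⟨dn, hdn⟩ := withBot_cases _ h_bot h_top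
  refine ⟨fun j => t (c.take (j-1)),
    fun j i => if i < j then c.getD (i-1) false else !(c.getD (i-1) false), ?_, ?_, ?_⟩
  · intro j' j h1 _
    simp only
    rw [if_pos (by omega), if_pos h1]
  · intro j _ _
    simp only
    rw [if_pos (by omega), if_neg (by omega), Bool.not_not]
  · intro j hj1 hj2
    have hgetD_take : ∀ (i n : ℕ), i < n → (c.take n).getD i false = c.getD i false := by
      intro i n hin
      rw [List.getD_eq_getElem?_getD, List.getD_eq_getElem?_getD, List.getElem?_take]
      simp [hin]
    set m := min j (K+1) with hm
    have hm1 : 1 ≤ m := by omega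
    have hmKlen : m - 1 ≤ K := by omega
    set w : Bool := if m < j then c.getD (m-1) false else !(c.getD (m-1) false) with hwdef
    have hlen : (c.take (m-1)).length = m - 1 := by
      rw [List.length_take]; omega
    have hset : restrictList G (List.ofFn fun i : Fin (min j (K+1)) =>
          ((fun j' => t (c.take (j'-1))) (i.1 + 1),
            (fun j' i' => if i' < j' then c.getD (i'-1) false else !(c.getD (i'-1) false)) j (i.1 + 1)))
        = branchRestrict G t (c.take (m-1) ++ [w]) := by
      rw [branchRestrict_snoc]
      ext f
      simp only [restrictList, res, branchRestrict, Set.mem_setOf_eq, Set.mem_sep_iff,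
        List.forall_mem_ofFn_iff, hlen]
      constructor
      · rintro ⟨hG, h⟩
        refine ⟨⟨hG, ?_⟩, ?_⟩
        · intro i hi
          have h2 := h ⟨i, by omega⟩
          simp only [Nat.add_sub_cancel] at h2
          rw [if_pos (by omega)] at h2
          rw [List.take_take, min_eq_left (by omega), hgetD_take i (m-1) hi]
          exact h2
        · have h2 := h ⟨m-1, by omega⟩
          simp only [Nat.add_sub_cancel] at h2
          rw [show m - 1 + 1 = m by omega] at h2
          exact h2
      · rintro ⟨⟨hG, h⟩, hlast⟩
        refine ⟨hG, fun i => ?_⟩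
        simp only [Nat.add_sub_cancel]
        rcases Nat.lt_or_ge i.1 (m-1) with hi | hi
        · have h2 := h i.1 hi
          rw [List.take_take, min_eq_left (by omega), hgetD_take i.1 (m-1) hi] at h2
          rw [if_pos (by omega)]
          exact h2
        · have hieq : i.1 = m - 1 := by
            have := i.2
            omega
          rw [hieq, show m - 1 + 1 = m by omega]
          exact hlast
    rw [hset]
    have hne : (branchRestrict G t (c.take (m-1) ++ [w])).Nonempty := by
      rw [branchRestrict_snoc]
      exact Set.nonempty_iff_ne_empty.mpr (hflip (m-1) hmKlen w)
    constructor
    · have h0 : ShattersDepth (branchRestrict G t (c.take (m-1) ++ [w])) 0 :=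
        shattersDepth_zero (t []) hne
      have h1 := le_ldim_iff.2 h0
      exact_mod_cast h1
    · rcases Nat.lt_or_ge K j with hjK | hjK
      · -- j = K+1 or K+2 : full branch
        have hmK1 : m - 1 = K := by omega
        rw [hmK1, hctake]
        exact lt_of_le_of_ne (ldim_mono branchRestrict_subset) (hC w)
      · -- j ≤ K, so m = j
        have hmj : m = j := by omega
        by_contra hge
        have hgoal := not_lt.mp hge
        have hflipSD : ShattersDepth (branchRestrict G t (c.take (m-1) ++ [w])) dn :=
          le_ldim_iff.1 (le_trans (le_of_eq hdn.symm) hgoal)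
        have hw : w = !(c.getD (m-1) false) := if_neg (by omega)
        have hsibSD : ShattersDepth (branchRestrict G t (c.take (m-1) ++ [!w])) dn := by
          rw [hw, Bool.not_not, ← htake_succ (m-1) (by omega), show m - 1 + 1 = m by omega]
          refine le_ldim_iff.1 ?_
          rw [hLdim' m (by omega), hdn]
        rw [branchRestrict_snoc] at hflipSD hsibSD
        have hcomb := combine' (t (c.take (m-1))) w hflipSD hsibSD
        have hG1 : ShattersDepth G (dn + 1) := shattersDepth_mono branchRestrict_subset hcomb
        have h2 := le_ldim_iff.2 hG1
        rw [hdn] at h2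
        have : dn + 1 ≤ dn := by exact_mod_cast h2
        omega
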